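/- arXiv:1812.09211 — 3 statements merged into one kernel-verified Lean document; each statement's English description precedes it below -/
import Mathlib

section
/- (Commutator formula) Let A and B be elements of a complex Banach algebra (for instance bounded operators on a complex Hilbert space). Then lim_{n→∞} (exp(A/n) · exp(B/n) · exp(−A/n) · exp(−B/n))^{n²} = exp(AB − BA), with convergence in the norm of the algebra. -/
open Filter

section CommutatorFormulaAux
open NormedSpace Nat Filter


lemma fact_ge (j : ℕ) : 6 * 2 ^ j ≤ (j + 3)! := by
  induction j with
  | zero => simp [Nat.factorial]
  | succ k ih =>
      have : (k + 1 + 3)! = (k + 4) * (k + 3)! := rfl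
      rw [this]
      calc 6 * 2 ^ (k + 1) = 2 * (6 * 2 ^ k) := by ring
        _ ≤ 2 * (k + 3)! := by omega
        _ ≤ (k + 4) * (k + 3)! := by
            exact Nat.mul_le_mul_right _ (by omega)

section
variable {𝔸 : Type*} [NormedRing 𝔸] [NormedAlgebra ℂ 𝔸] [CompleteSpace 𝔸]

lemma exp_taylor2 (x : 𝔸) (hx : ‖x‖ ≤ 1) :
    ‖exp x - (1 + x + (2:ℂ)⁻¹ • (x * x))‖ ≤ ‖x‖ ^ 3 := by
  have h : HasSum (fun n : ℕ => ((n ! : ℂ))⁻¹ • x ^ n) (exp x) :=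
    exp_series_hasSum_exp' x
  have hS : ∑ i ∈ Finset.range 3, ((i ! : ℂ))⁻¹ • x ^ i
      = 1 + x + (2:ℂ)⁻¹ • (x * x) := by
    simp [Finset.sum_range_succ, Nat.factorial, pow_succ]
  have htail : HasSum (fun j : ℕ => (((j + 3)! : ℂ))⁻¹ • x ^ (j + 3))
      (exp x - (1 + x + (2:ℂ)⁻¹ • (x * x))) := by
    rw [← hS]
    exact (hasSum_nat_add_iff' 3).mpr h
  have hbound : ∀ j : ℕ, ‖(((j + 3)! : ℂ))⁻¹ • x ^ (j + 3)‖
      ≤ ‖x‖ ^ 3 * ((1/6) * (1/2) ^ j) := by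
    intro j
    rw [norm_smul]
    have h1 : ‖((((j + 3)! : ℂ))⁻¹)‖ = (((j+3)! : ℝ))⁻¹ := by
      rw [norm_inv]
      norm_num
    have h2 : ‖x ^ (j + 3)‖ ≤ ‖x‖ ^ 3 := by
      calc ‖x ^ (j + 3)‖ ≤ ‖x‖ ^ (j + 3) := norm_pow_le' x (by omega)
        _ = ‖x‖ ^ j * ‖x‖ ^ 3 := by ring
        _ ≤ 1 * ‖x‖ ^ 3 := by
            have := pow_le_one₀ (norm_nonneg x) hx (n := j)
            nlinarith [pow_nonneg (norm_nonneg x) 3]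
        _ = ‖x‖ ^ 3 := by ring
    have h3 : (((j+3)! : ℝ))⁻¹ ≤ (1/6) * (1/2) ^ j := by
      have h6 : (6 * 2 ^ j : ℝ) ≤ ((j+3)! : ℝ) := by
        exact_mod_cast fact_ge j
      have := inv_anti₀ (by positivity : (0:ℝ) < 6 * 2 ^ j) h6
      calc (((j+3)! : ℝ))⁻¹ ≤ (6 * 2 ^ j : ℝ)⁻¹ := this
        _ = (1/6) * (1/2) ^ j := by
            rw [mul_inv, ← inv_pow]
            norm_num
    calc ‖((((j + 3)! : ℂ))⁻¹)‖ * ‖x ^ (j + 3)‖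
        ≤ (((j+3)! : ℝ))⁻¹ * ‖x‖ ^ 3 := by
          rw [h1]
          exact mul_le_mul_of_nonneg_left h2 (by positivity)
      _ ≤ ((1/6) * (1/2) ^ j) * ‖x‖ ^ 3 := by
          apply mul_le_mul_of_nonneg_right h3 (by positivity)
      _ = ‖x‖ ^ 3 * ((1/6) * (1/2) ^ j) := by ring
  have hg : Summable (fun j : ℕ => ‖x‖ ^ 3 * ((1/6) * (1/2) ^ j)) := by
    apply Summable.mul_left
    apply Summable.mul_left
    exact summable_geometric_of_lt_one (by norm_num) (by norm_num)
  have hnorm_summable : Summable (fun j : ℕ => ‖(((j + 3)! : ℂ))⁻¹ • x ^ (j + 3)‖) :=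
    Summable.of_nonneg_of_le (fun _ => norm_nonneg _) hbound hg
  calc ‖exp x - (1 + x + (2:ℂ)⁻¹ • (x * x))‖
      = ‖∑' j : ℕ, (((j + 3)! : ℂ))⁻¹ • x ^ (j + 3)‖ := by rw [htail.tsum_eq]
    _ ≤ ∑' j : ℕ, ‖(((j + 3)! : ℂ))⁻¹ • x ^ (j + 3)‖ := norm_tsum_le_tsum_norm hnorm_summable
    _ ≤ ∑' j : ℕ, ‖x‖ ^ 3 * ((1/6) * (1/2) ^ j) := Summable.tsum_le_tsum hbound hnorm_summable hg
    _ = ‖x‖ ^ 3 * ((1/6) * (1/(1 - 1/2))) := by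
        rw [tsum_mul_left, tsum_mul_left, tsum_geometric_of_lt_one (by norm_num) (by norm_num)]
        ring
    _ ≤ ‖x‖ ^ 3 * 1 := by
        apply mul_le_mul_of_nonneg_left (by norm_num) (by positivity)
    _ = ‖x‖ ^ 3 := by ring

lemma norm_exp_le (h1 : ‖(1:𝔸)‖ ≤ 1) (x : 𝔸) : ‖exp x‖ ≤ Real.exp ‖x‖ := by
  have hsum : Summable (fun n : ℕ => ‖((n ! : ℂ))⁻¹ • x ^ n‖) := norm_expSeries_summable' x
  have hgsum : Summable (fun n : ℕ => ‖x‖ ^ n / n !) := Real.summable_pow_div_factorial ‖x‖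
  have hb : ∀ n : ℕ, ‖((n ! : ℂ))⁻¹ • x ^ n‖ ≤ ‖x‖ ^ n / n ! := by
    intro n
    rw [norm_smul, norm_inv]
    have hn : ‖((n ! : ℂ))‖ = (n ! : ℝ) := by
      rw [Complex.norm_natCast]
    rw [hn, inv_mul_eq_div]
    have hxp : ‖x ^ n‖ ≤ ‖x‖ ^ n := by
      cases n with
      | zero => simpa using h1
      | succ k => exact norm_pow_le' x (Nat.succ_pos k)
    apply div_le_div_of_nonneg_right hxp
    positivity
  have h2 : HasSum (fun n : ℕ => ((n ! : ℂ))⁻¹ • x ^ n) (exp x) := exp_series_hasSum_exp' x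
  calc ‖exp x‖ = ‖∑' n : ℕ, ((n ! : ℂ))⁻¹ • x ^ n‖ := by rw [h2.tsum_eq]
    _ ≤ ∑' n : ℕ, ‖((n ! : ℂ))⁻¹ • x ^ n‖ := norm_tsum_le_tsum_norm hsum
    _ ≤ ∑' n : ℕ, ‖x‖ ^ n / n ! := Summable.tsum_le_tsum hb hsum hgsum
    _ = Real.exp ‖x‖ := by
        rw [Real.exp_eq_exp_ℝ, exp_eq_tsum_div]

omit [NormedAlgebra ℂ 𝔸] [CompleteSpace 𝔸] in
lemma nmul {x y : 𝔸} {p q : ℝ} (hx : ‖x‖ ≤ p) (hy : ‖y‖ ≤ q) : ‖x * y‖ ≤ p * q :=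
  le_trans (norm_mul_le x y)
    (mul_le_mul hx hy (norm_nonneg y) ((norm_nonneg x).trans hx))

omit [NormedAlgebra ℂ 𝔸] [CompleteSpace 𝔸] in
lemma nadd4 (p q r t : 𝔸) : ‖p + q + r + t‖ ≤ ‖p‖ + ‖q‖ + ‖r‖ + ‖t‖ := by
  calc ‖p + q + r + t‖ ≤ ‖p + q + r‖ + ‖t‖ := norm_add_le _ _
    _ ≤ (‖p + q‖ + ‖r‖) + ‖t‖ := by gcongr; exact norm_add_le _ _
    _ ≤ ((‖p‖ + ‖q‖) + ‖r‖) + ‖t‖ := by gcongr; exact norm_add_le _ _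

set_option maxHeartbeats 1000000 in
lemma key (h1 : ‖(1:𝔸)‖ ≤ 1) {a b : 𝔸} {s : ℝ}
    (ha : ‖a‖ ≤ s) (hb : ‖b‖ ≤ s) (hs : s ≤ 1/2) :
    ‖exp a * exp b * exp (-a) * exp (-b) - exp (a * b - b * a)‖
      ≤ 200 * s ^ 3 := by
  have hs0 : (0:ℝ) ≤ s := le_trans (norm_nonneg a) ha
  have hs1 : s ≤ 1 := le_trans hs (by norm_num)
  have hs3 : (0:ℝ) ≤ s ^ 3 := pow_nonneg hs0 3
  have hs31 : s ^ 3 ≤ 1 := by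
    calc s ^ 3 ≤ 1 ^ 3 := pow_le_pow_left₀ hs0 hs1 3
      _ = 1 := by norm_num
  have h43 : s ^ 4 ≤ s ^ 3 := pow_le_pow_of_le_one hs0 hs1 (by norm_num)
  have h53 : s ^ 5 ≤ s ^ 3 := pow_le_pow_of_le_one hs0 hs1 (by norm_num)
  have h63 : s ^ 6 ≤ s ^ 3 := pow_le_pow_of_le_one hs0 hs1 (by norm_num)
  have h64 : s ^ 6 ≤ s ^ 4 := pow_le_pow_of_le_one hs0 hs1 (by norm_num)
  set x2 : 𝔸 := (2:ℂ)⁻¹ • (a * a) with hx2def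
  set y2 : 𝔸 := (2:ℂ)⁻¹ • (b * b) with hy2def
  have hc2 : ‖((2:ℂ)⁻¹)‖ = 1/2 := by norm_num
  have hx2 : ‖x2‖ ≤ s^2 * (1/2) := by
    rw [hx2def, norm_smul, hc2]
    have : ‖a * a‖ ≤ s * s := nmul ha ha
    nlinarith
  have hy2 : ‖y2‖ ≤ s^2 * (1/2) := by
    rw [hy2def, norm_smul, hc2]
    have : ‖b * b‖ ≤ s * s := nmul hb hb
    nlinarith
  have hr : ∀ x : 𝔸, ‖x‖ ≤ s → ‖exp x - (1 + x + (2:ℂ)⁻¹ • (x * x))‖ ≤ s ^ 3 := by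
    intro x hx
    calc ‖exp x - (1 + x + (2:ℂ)⁻¹ • (x * x))‖ ≤ ‖x‖ ^ 3 :=
          exp_taylor2 x (hx.trans hs1)
      _ ≤ s ^ 3 := pow_le_pow_left₀ (norm_nonneg x) hx 3
  have hP : ∀ x : 𝔸, ‖x‖ ≤ s → ‖1 + x + (2:ℂ)⁻¹ • (x * x)‖ ≤ 2 := by
    intro x hx
    have h2 : ‖(2:ℂ)⁻¹ • (x * x)‖ ≤ s^2 * (1/2) := by
      rw [norm_smul, hc2]
      have : ‖x * x‖ ≤ s * s := nmul hx hx
      nlinarith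
    calc ‖1 + x + (2:ℂ)⁻¹ • (x * x)‖ ≤ ‖(1:𝔸)‖ + ‖x‖ + ‖(2:ℂ)⁻¹ • (x * x)‖ :=
          norm_add₃_le
      _ ≤ 1 + s + s^2 * (1/2) := by gcongr <;> assumption
      _ ≤ 2 := by nlinarith
  have hE : ∀ x : 𝔸, ‖x‖ ≤ s → ‖exp x‖ ≤ 3 := by
    intro x hx
    have h4 := hr x hx
    have h5 := hP x hx
    calc ‖exp x‖
        = ‖(exp x - (1 + x + (2:ℂ)⁻¹ • (x * x))) + (1 + x + (2:ℂ)⁻¹ • (x * x))‖ := by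
          rw [sub_add_cancel]
      _ ≤ ‖exp x - (1 + x + (2:ℂ)⁻¹ • (x * x))‖ + ‖1 + x + (2:ℂ)⁻¹ • (x * x)‖ :=
          norm_add_le _ _
      _ ≤ 3 := by linarith
  have hna : ‖-a‖ ≤ s := by rwa [norm_neg]
  have hnb : ‖-b‖ ≤ s := by rwa [norm_neg]
  set P1 : 𝔸 := 1 + a + x2 with hP1
  set P2 : 𝔸 := 1 + b + y2 with hP2
  set P3 : 𝔸 := 1 + -a + x2 with hP3
  set P4 : 𝔸 := 1 + -b + y2 with hP4
  have hrP3 : ‖exp (-a) - P3‖ ≤ s ^ 3 := by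
    have := hr (-a) hna
    rwa [neg_mul_neg, ← hx2def, ← hP3] at this
  have hrP4 : ‖exp (-b) - P4‖ ≤ s ^ 3 := by
    have := hr (-b) hnb
    rwa [neg_mul_neg, ← hy2def, ← hP4] at this
  have hrP1 : ‖exp a - P1‖ ≤ s ^ 3 := hr a ha
  have hrP2 : ‖exp b - P2‖ ≤ s ^ 3 := hr b hb
  have hP1n : ‖P1‖ ≤ 2 := hP a ha
  have hP2n : ‖P2‖ ≤ 2 := hP b hb
  have hP3n : ‖P3‖ ≤ 2 := by
    have := hP (-a) hna
    rwa [neg_mul_neg, ← hx2def, ← hP3] at this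
  have hP4n : ‖P4‖ ≤ 2 := by
    have := hP (-b) hnb
    rwa [neg_mul_neg, ← hy2def, ← hP4] at this
  -- step 1 : replace exponentials by polynomials
  have step1 : ‖exp a * exp b * exp (-a) * exp (-b) - P1 * P2 * P3 * P4‖
      ≤ 108 * s ^ 3 := by
    have hexpand : exp a * exp b * exp (-a) * exp (-b) - P1 * P2 * P3 * P4
        = (exp a - P1) * (exp b * (exp (-a) * exp (-b)))
          + P1 * ((exp b - P2) * (exp (-a) * exp (-b)))
          + P1 * P2 * ((exp (-a) - P3) * exp (-b))
          + P1 * P2 * P3 * (exp (-b) - P4) := by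
      noncomm_ring
    rw [hexpand]
    have t1 : ‖(exp a - P1) * (exp b * (exp (-a) * exp (-b)))‖ ≤ s^3 * (3*(3*3)) :=
      nmul hrP1 (nmul (hE b hb) (nmul (hE _ hna) (hE _ hnb)))
    have t2 : ‖P1 * ((exp b - P2) * (exp (-a) * exp (-b)))‖ ≤ 2 * (s^3 * (3*3)) :=
      nmul hP1n (nmul hrP2 (nmul (hE _ hna) (hE _ hnb)))
    have t3 : ‖P1 * P2 * ((exp (-a) - P3) * exp (-b))‖ ≤ 2 * 2 * (s^3 * 3) :=
      nmul (nmul hP1n hP2n) (nmul hrP3 (hE _ hnb))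
    have t4 : ‖P1 * P2 * P3 * (exp (-b) - P4)‖ ≤ 2 * 2 * 2 * s^3 :=
      nmul (nmul (nmul hP1n hP2n) hP3n) hrP4
    apply le_trans (nadd4 _ _ _ _)
    linarith
  -- step 2 : expand the polynomial product
  set u : 𝔸 := a + b with hu
  set v : 𝔸 := x2 + a * b + y2 with hv
  set w1 : 𝔸 := a * y2 + x2 * b + x2 * y2 with hw1
  set w2 : 𝔸 := (-a) * y2 + x2 * (-b) + x2 * y2 with hw2
  set R : 𝔸 := w2 + (u * v - v * u) + u * w2 + v * v + v * w2 + w1 * (1 - u + v + w2)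
    with hR
  have hPP : P1 * P2 * P3 * P4 = 1 + (v + v - u * u) + R := by
    rw [hP1, hP2, hP3, hP4, hR, hu, hv, hw1, hw2]
    noncomm_ring
  have hcomm : v + v - u * u = a * b - b * a := by
    have hx2' : x2 + x2 = a * a := by
      rw [hx2def, ← add_smul]
      norm_num
    have hy2' : y2 + y2 = b * b := by
      rw [hy2def, ← add_smul]
      norm_num
    calc v + v - u * u
        = (x2 + x2) + (y2 + y2) + (a*b + a*b) - ((a*a) + a*b + b*a + (b*b)) := by
          rw [hv, hu]; noncomm_ring
      _ = a * b - b * a := by rw [hx2', hy2']; noncomm_ring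
  -- norm bounds on u, v, w1, w2, R
  have hun : ‖u‖ ≤ 2 * s := by
    rw [hu]
    calc ‖a + b‖ ≤ ‖a‖ + ‖b‖ := norm_add_le _ _
      _ ≤ 2 * s := by linarith
  have hvn : ‖v‖ ≤ 2 * s^2 := by
    rw [hv]
    have := nmul ha hb
    calc ‖x2 + a * b + y2‖ ≤ ‖x2‖ + ‖a*b‖ + ‖y2‖ := norm_add₃_le
      _ ≤ s^2 * (1/2) + s * s + s^2 * (1/2) := by gcongr
      _ = 2 * s^2 := by ring
  have hw1n : ‖w1‖ ≤ 2 * s^3 := by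
    rw [hw1]
    have t1 : ‖a * y2‖ ≤ s * (s^2 * (1/2)) := nmul ha hy2
    have t2 : ‖x2 * b‖ ≤ (s^2 * (1/2)) * s := nmul hx2 hb
    have t3 : ‖x2 * y2‖ ≤ (s^2 * (1/2)) * (s^2 * (1/2)) := nmul hx2 hy2
    calc ‖a * y2 + x2 * b + x2 * y2‖ ≤ ‖a * y2‖ + ‖x2 * b‖ + ‖x2 * y2‖ := norm_add₃_le
      _ ≤ s * (s^2 * (1/2)) + (s^2 * (1/2)) * s + (s^2 * (1/2)) * (s^2 * (1/2)) :=
          add_le_add (add_le_add t1 t2) t3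
      _ = s^3 + s^4 * (1/4) := by ring
      _ ≤ 2 * s^3 := by linarith
  have hw2n : ‖w2‖ ≤ 2 * s^3 := by
    rw [hw2]
    have t1 : ‖(-a) * y2‖ ≤ s * (s^2 * (1/2)) := nmul hna hy2
    have t2 : ‖x2 * (-b)‖ ≤ (s^2 * (1/2)) * s := nmul hx2 hnb
    have t3 : ‖x2 * y2‖ ≤ (s^2 * (1/2)) * (s^2 * (1/2)) := nmul hx2 hy2
    calc ‖(-a) * y2 + x2 * (-b) + x2 * y2‖ ≤ ‖(-a) * y2‖ + ‖x2 * (-b)‖ + ‖x2 * y2‖ :=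
          norm_add₃_le
      _ ≤ s * (s^2 * (1/2)) + (s^2 * (1/2)) * s + (s^2 * (1/2)) * (s^2 * (1/2)) :=
          add_le_add (add_le_add t1 t2) t3
      _ = s^3 + s^4 * (1/4) := by ring
      _ ≤ 2 * s^3 := by linarith
  have hRn : ‖R‖ ≤ 30 * s^3 := by
    rw [hR]
    have huv : ‖u * v - v * u‖ ≤ 2*s * (2*s^2) + 2*s^2 * (2*s) := by
      calc ‖u * v - v * u‖ ≤ ‖u * v‖ + ‖v * u‖ := norm_sub_le _ _
        _ ≤ 2*s * (2*s^2) + 2*s^2 * (2*s) := add_le_add (nmul hun hvn) (nmul hvn hun)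
    have huw2 : ‖u * w2‖ ≤ 2*s * (2*s^3) := nmul hun hw2n
    have hvv : ‖v * v‖ ≤ 2*s^2 * (2*s^2) := nmul hvn hvn
    have hvw2 : ‖v * w2‖ ≤ 2*s^2 * (2*s^3) := nmul hvn hw2n
    have haux : ‖1 - u + v + w2‖ ≤ 3 := by
      calc ‖1 - u + v + w2‖ ≤ ‖(1:𝔸) - u‖ + ‖v‖ + ‖w2‖ := norm_add₃_le
        _ ≤ (‖(1:𝔸)‖ + ‖u‖) + ‖v‖ + ‖w2‖ := by gcongr; exact norm_sub_le _ _
        _ ≤ (1 + 2*s) + 2*s^2 + 2*s^3 := by gcongr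
        _ ≤ 3 := by nlinarith
    have hw1aux : ‖w1 * (1 - u + v + w2)‖ ≤ 2*s^3 * 3 := nmul hw1n haux
    calc ‖w2 + (u * v - v * u) + u * w2 + v * v + v * w2 + w1 * (1 - u + v + w2)‖
        ≤ ‖w2 + (u * v - v * u) + u * w2 + v * v + v * w2‖ + ‖w1 * (1 - u + v + w2)‖ :=
          norm_add_le _ _
      _ ≤ (‖w2 + (u * v - v * u) + u * w2 + v * v‖ + ‖v * w2‖) + ‖w1 * (1 - u + v + w2)‖ := by
          gcongr; exact norm_add_le _ _
      _ ≤ ((‖w2‖ + ‖u * v - v * u‖ + ‖u * w2‖ + ‖v * v‖) + ‖v * w2‖)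
            + ‖w1 * (1 - u + v + w2)‖ := by
          gcongr; exact nadd4 _ _ _ _
      _ ≤ ((2*s^3 + (2*s * (2*s^2) + 2*s^2 * (2*s)) + 2*s * (2*s^3) + 2*s^2 * (2*s^2))
            + 2*s^2 * (2*s^3)) + 2*s^3 * 3 :=
          add_le_add (add_le_add
            (add_le_add (add_le_add (add_le_add hw2n huv) huw2) hvv) hvw2) hw1aux
      _ = 16 * s^3 + 8 * s^4 + 4 * s^5 := by ring
      _ ≤ 30 * s^3 := by linarith
  -- step 3 : exp of the commutator
  have hyn : ‖a * b - b * a‖ ≤ 2 * s^2 := by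
    calc ‖a * b - b * a‖ ≤ ‖a * b‖ + ‖b * a‖ := norm_sub_le _ _
      _ ≤ s * s + s * s := add_le_add (nmul ha hb) (nmul hb ha)
      _ = 2 * s^2 := by ring
  have step3 : ‖exp (a * b - b * a) - (1 + (a * b - b * a))‖ ≤ 2 * s^3 := by
    set y : 𝔸 := a * b - b * a with hy
    have hyn1 : ‖y‖ ≤ 1 := by nlinarith [sq_nonneg s, sq_nonneg (s - 1/2)]
    have ht := exp_taylor2 y hyn1
    have hyy : ‖(2:ℂ)⁻¹ • (y * y)‖ ≤ (1/2) * (2*s^2 * (2*s^2)) := by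
      rw [norm_smul, hc2]
      have := nmul hyn hyn
      nlinarith
    have hy3 : ‖y‖^3 ≤ 8 * s^6 := by
      calc ‖y‖^3 ≤ (2*s^2)^3 := pow_le_pow_left₀ (norm_nonneg y) hyn 3
        _ = 8 * s^6 := by ring
    have hsplit : exp y - (1 + y)
        = (exp y - (1 + y + (2:ℂ)⁻¹ • (y * y))) + (2:ℂ)⁻¹ • (y * y) := by
      abel
    rw [hsplit]
    calc ‖(exp y - (1 + y + (2:ℂ)⁻¹ • (y * y))) + (2:ℂ)⁻¹ • (y * y)‖
        ≤ ‖exp y - (1 + y + (2:ℂ)⁻¹ • (y * y))‖ + ‖(2:ℂ)⁻¹ • (y * y)‖ := norm_add_le _ _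
      _ ≤ 8 * s^6 + (1/2) * (2*s^2 * (2*s^2)) := add_le_add (ht.trans hy3) hyy
      _ = 8 * s^6 + 2 * s^4 := by ring
      _ ≤ 2 * s^3 := by
          have hs38 : s^3 ≤ 1/8 := by
            have := pow_le_pow_left₀ hs0 hs 3
            norm_num at this
            linarith
          have e1 : s^6 = s^3 * s^3 := by ring
          have e2 : s^4 = s^3 * s := by ring
          nlinarith [mul_le_mul_of_nonneg_left hs38 hs3, mul_le_mul_of_nonneg_left hs hs3]
  -- combine
  have hfinal : exp a * exp b * exp (-a) * exp (-b) - exp (a * b - b * a)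
      = (exp a * exp b * exp (-a) * exp (-b) - P1 * P2 * P3 * P4)
        + R
        + ((1 + (a * b - b * a)) - exp (a * b - b * a)) := by
    have : P1 * P2 * P3 * P4 = 1 + (a * b - b * a) + R := by rw [hPP, hcomm]
    rw [this]
    abel
  rw [hfinal]
  have hlast : ‖(1 + (a * b - b * a)) - exp (a * b - b * a)‖ ≤ 2 * s^3 := by
    rw [norm_sub_rev]
    exact step3
  calc ‖_ + R + _‖
      ≤ ‖(exp a * exp b * exp (-a) * exp (-b) - P1 * P2 * P3 * P4) + R‖
        + ‖(1 + (a * b - b * a)) - exp (a * b - b * a)‖ := norm_add_le _ _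
    _ ≤ (‖exp a * exp b * exp (-a) * exp (-b) - P1 * P2 * P3 * P4‖ + ‖R‖)
        + ‖(1 + (a * b - b * a)) - exp (a * b - b * a)‖ := by
        gcongr; exact norm_add_le _ _
    _ ≤ 108 * s^3 + 30 * s^3 + 2 * s^3 := by gcongr
    _ ≤ 200 * s ^ 3 := by linarith

omit [NormedAlgebra ℂ 𝔸] [CompleteSpace 𝔸] in
lemma norm_pow_le1 (h1 : ‖(1:𝔸)‖ ≤ 1) (x : 𝔸) (m : ℕ) : ‖x ^ m‖ ≤ ‖x‖ ^ m := by
  induction m with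
  | zero => simpa using h1
  | succ k ih =>
      rw [pow_succ, pow_succ]
      calc ‖x ^ k * x‖ ≤ ‖x ^ k‖ * ‖x‖ := norm_mul_le _ _
        _ ≤ ‖x‖ ^ k * ‖x‖ := mul_le_mul_of_nonneg_right ih (norm_nonneg x)

omit [NormedAlgebra ℂ 𝔸] [CompleteSpace 𝔸] in
lemma pow_diff_bound (h1 : ‖(1:𝔸)‖ ≤ 1) (x y : 𝔸) {L : ℝ} (hL : 1 ≤ L)
    (hx : ‖x‖ ≤ L) (hy : ‖y‖ ≤ L) (m : ℕ) :
    ‖x ^ m - y ^ m‖ ≤ m * L ^ m * ‖x - y‖ := by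
  induction m with
  | zero => simp
  | succ k ih =>
      have hL0 : (0:ℝ) ≤ L := le_trans zero_le_one hL
      have hid : x ^ (k+1) - y ^ (k+1) = x ^ k * (x - y) + (x ^ k - y ^ k) * y := by
        noncomm_ring
      have hxk : ‖x ^ k‖ ≤ L ^ k := le_trans (norm_pow_le1 h1 x k)
        (pow_le_pow_left₀ (norm_nonneg x) hx k)
      have hLk : (L:ℝ) ^ k ≤ L ^ (k+1) := by
        calc L ^ k = L ^ k * 1 := by ring
          _ ≤ L ^ k * L := by
              have : (0:ℝ) ≤ L ^ k := by positivity
              nlinarith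
          _ = L ^ (k+1) := by ring
      calc ‖x ^ (k+1) - y ^ (k+1)‖
          ≤ ‖x ^ k * (x - y)‖ + ‖(x ^ k - y ^ k) * y‖ := by rw [hid]; exact norm_add_le _ _
        _ ≤ L ^ k * ‖x - y‖ + (k * L ^ k * ‖x - y‖) * L := by
            have t1 : ‖x ^ k * (x - y)‖ ≤ L ^ k * ‖x - y‖ :=
              le_trans (norm_mul_le _ _)
                (mul_le_mul_of_nonneg_right hxk (norm_nonneg _))
            have t2 : ‖(x ^ k - y ^ k) * y‖ ≤ (k * L ^ k * ‖x - y‖) * L :=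
              le_trans (norm_mul_le _ _) (mul_le_mul ih hy (norm_nonneg y)
                (by positivity))
            exact add_le_add t1 t2
        _ ≤ L ^ (k+1) * ‖x - y‖ + (k * L ^ (k+1) * ‖x - y‖) := by
            have : (k * L ^ k * ‖x - y‖) * L = k * (L ^ k * L) * ‖x - y‖ := by ring
            rw [this, ← pow_succ]
            have h0 : (0:ℝ) ≤ ‖x - y‖ := norm_nonneg _
            have hk0 : (0:ℝ) ≤ (k:ℝ) := Nat.cast_nonneg k
            nlinarith [mul_le_mul_of_nonneg_right hLk h0]
        _ = (k+1 : ℕ) * L ^ (k+1) * ‖x - y‖ := by push_cast; ring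

set_option maxHeartbeats 1600000 in
theorem commutator_formula_aux (h1 : ‖(1:𝔸)‖ ≤ 1) (A B : 𝔸) :
    Tendsto (fun n : ℕ =>
        (exp ((n : ℂ)⁻¹ • A) * exp ((n : ℂ)⁻¹ • B) *
          exp (-((n : ℂ)⁻¹ • A)) * exp (-((n : ℂ)⁻¹ • B))) ^ (n ^ 2))
      atTop (nhds (exp (A * B - B * A))) := by
  set K : ℝ := ‖A‖ + ‖B‖ + 1 with hK
  have hK1 : 1 ≤ K := by
    have := norm_nonneg A
    have := norm_nonneg B
    simp only [hK]; linarith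
  have hK0 : 0 < K := lt_of_lt_of_le one_pos hK1
  set D : ℝ := Real.exp (202 * K ^ 2) with hD
  rw [tendsto_iff_norm_sub_tendsto_zero]
  apply squeeze_zero_norm' (a := fun n : ℕ => 200 * D * K ^ 3 / n)
  · filter_upwards [eventually_ge_atTop (⌈2 * K⌉₊)] with n hn
    have hn2K : 2 * K ≤ (n : ℝ) := le_trans (Nat.le_ceil _) (by exact_mod_cast hn)
    have hn1 : 1 ≤ (n : ℝ) := by linarith
    have hnpos : (0:ℝ) < n := by linarith
    have hnne : ((n : ℂ)) ≠ 0 := by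
      simp only [ne_eq, Nat.cast_eq_zero]
      exact_mod_cast (by exact_mod_cast hnpos : (0:ℝ) < (n:ℝ)).ne'
    set s : ℝ := K / n with hsdef
    have hs0 : 0 < s := by positivity
    have hs : s ≤ 1 / 2 := by
      rw [hsdef, div_le_iff₀ hnpos]
      linarith
    set a : 𝔸 := (n : ℂ)⁻¹ • A with hadef
    set b : 𝔸 := (n : ℂ)⁻¹ • B with hbdef
    have hninv : ‖((n:ℂ))⁻¹‖ = (n:ℝ)⁻¹ := by
      rw [norm_inv, Complex.norm_natCast]
    have ha : ‖a‖ ≤ s := by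
      rw [hadef, norm_smul, hninv, hsdef]
      have hA : ‖A‖ ≤ K := by simp only [hK]; linarith [norm_nonneg B]
      calc ((n:ℝ))⁻¹ * ‖A‖ ≤ ((n:ℝ))⁻¹ * K :=
            mul_le_mul_of_nonneg_left hA (by positivity)
        _ = K / n := by rw [div_eq_inv_mul]
    have hb : ‖b‖ ≤ s := by
      rw [hbdef, norm_smul, hninv, hsdef]
      have hB : ‖B‖ ≤ K := by simp only [hK]; linarith [norm_nonneg A]
      calc ((n:ℝ))⁻¹ * ‖B‖ ≤ ((n:ℝ))⁻¹ * K :=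
            mul_le_mul_of_nonneg_left hB (by positivity)
        _ = K / n := by rw [div_eq_inv_mul]
    have hkey := key h1 ha hb hs
    clear_value a b
    -- the commutator rescales
    have hab : a * b - b * a = ((n:ℂ)⁻¹ * (n:ℂ)⁻¹) • (A * B - B * A) := by
      rw [hadef, hbdef, smul_mul_smul_comm, smul_mul_smul_comm, ← smul_sub]
    have hexp_pow : (exp (a * b - b * a)) ^ (n ^ 2) = exp (A * B - B * A) := by
      let +nondep : NormedAlgebra ℚ 𝔸 := .restrictScalars ℚ ℂ 𝔸
      rw [← exp_nsmul]
      congr 1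
      rw [hab, ← Nat.cast_smul_eq_nsmul ℂ (n ^ 2), smul_smul]
      have hone : ((n ^ 2 : ℕ) : ℂ) * (((n:ℂ))⁻¹ * ((n:ℂ))⁻¹) = 1 := by
        push_cast
        field_simp
      rw [hone, one_smul]
    -- norms of the two elements
    have hyn : ‖a * b - b * a‖ ≤ 2 * s ^ 2 := by
      have h1' : ‖a * b‖ ≤ s * s := le_trans (norm_mul_le _ _)
        (mul_le_mul ha hb (norm_nonneg b) hs0.le)
      have h2' : ‖b * a‖ ≤ s * s := le_trans (norm_mul_le _ _)
        (mul_le_mul hb ha (norm_nonneg a) hs0.le)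
      calc ‖a * b - b * a‖ ≤ ‖a * b‖ + ‖b * a‖ := norm_sub_le _ _
        _ ≤ s * s + s * s := add_le_add h1' h2'
        _ = 2 * s ^ 2 := by ring
    set L : ℝ := Real.exp (2 * s ^ 2) + 200 * s ^ 3 with hL
    have hs3 : (0:ℝ) ≤ s ^ 3 := by positivity
    have hL1 : 1 ≤ L := by
      rw [hL]
      have := Real.one_le_exp (by positivity : (0:ℝ) ≤ 2 * s ^ 2)
      linarith
    have hEy : ‖exp (a * b - b * a)‖ ≤ L := by
      rw [hL]
      have := norm_exp_le h1 (a * b - b * a)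
      have h2' : Real.exp ‖a * b - b * a‖ ≤ Real.exp (2 * s ^ 2) :=
        Real.exp_le_exp.mpr hyn
      linarith
    have hEF : ‖exp a * exp b * exp (-a) * exp (-b)‖ ≤ L := by
      have : ‖exp a * exp b * exp (-a) * exp (-b)‖
          ≤ ‖exp (a * b - b * a)‖ + 200 * s ^ 3 := by
        have := norm_sub_norm_le (exp a * exp b * exp (-a) * exp (-b))
          (exp (a * b - b * a))
        linarith [hkey]
      rw [hL]
      have := norm_exp_le h1 (a * b - b * a)
      have h2' : Real.exp ‖a * b - b * a‖ ≤ Real.exp (2 * s ^ 2) :=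
        Real.exp_le_exp.mpr hyn
      linarith
    -- the power bound
    have hpow := pow_diff_bound h1
      (exp a * exp b * exp (-a) * exp (-b)) (exp (a * b - b * a))
      hL1 hEF hEy (n ^ 2)
    -- bound L ^ (n^2) ≤ D
    have hLD : L ^ (n ^ 2) ≤ D := by
      have hexp_sum : L ≤ Real.exp (2 * s ^ 2 + 200 * s ^ 3) := by
        rw [hL, Real.exp_add]
        have e0 : 1 + 200 * s ^ 3 ≤ Real.exp (200 * s ^ 3) := by
          linarith [Real.add_one_le_exp (200 * s ^ 3)]
        have e1 : Real.exp (2 * s ^ 2) * Real.exp (200 * s ^ 3)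
            ≥ Real.exp (2 * s ^ 2) * (1 + 200 * s ^ 3) :=
          mul_le_mul_of_nonneg_left e0 (Real.exp_pos _).le
        have e2 : Real.exp (2 * s ^ 2) * (1 + 200 * s ^ 3)
            ≥ Real.exp (2 * s ^ 2) + 200 * s ^ 3 := by
          have h1e : 1 ≤ Real.exp (2 * s ^ 2) := Real.one_le_exp (by positivity)
          nlinarith
        linarith
      have hLpow : L ^ (n ^ 2) ≤ Real.exp (2 * s ^ 2 + 200 * s ^ 3) ^ (n ^ 2) :=
        pow_le_pow_left₀ (le_trans zero_le_one hL1) hexp_sum _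
      have hexp_pow2 : Real.exp (2 * s ^ 2 + 200 * s ^ 3) ^ (n ^ 2)
          = Real.exp ((n ^ 2 : ℕ) * (2 * s ^ 2 + 200 * s ^ 3)) := by
        rw [← Real.exp_nat_mul]
      have harg : ((n ^ 2 : ℕ) : ℝ) * (2 * s ^ 2 + 200 * s ^ 3) ≤ 202 * K ^ 2 := by
        push_cast
        have hseq : (n:ℝ) ^ 2 * (2 * s ^ 2 + 200 * s ^ 3) = 2 * K ^ 2 + 200 * K ^ 3 / n := by
          rw [hsdef]
          field_simp
        rw [hseq]
        have : 200 * K ^ 3 / n ≤ 100 * K ^ 2 := by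
          rw [div_le_iff₀ hnpos]
          nlinarith
        nlinarith [sq_nonneg K]
      calc L ^ (n ^ 2) ≤ Real.exp ((n ^ 2 : ℕ) * (2 * s ^ 2 + 200 * s ^ 3)) := by
            rw [← hexp_pow2]; exact hLpow
        _ ≤ Real.exp (202 * K ^ 2) := Real.exp_le_exp.mpr harg
        _ = D := by rw [hD]
    -- conclusion for this n
    have hcalc : ‖(exp a * exp b * exp (-a) * exp (-b)) ^ (n ^ 2)
        - exp (A * B - B * A)‖ ≤ 200 * D * K ^ 3 / n := by
      rw [← hexp_pow]
      have hD0 : (0:ℝ) < D := Real.exp_pos _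
      calc ‖(exp a * exp b * exp (-a) * exp (-b)) ^ (n ^ 2)
          - (exp (a * b - b * a)) ^ (n ^ 2)‖
          ≤ (n ^ 2 : ℕ) * L ^ (n ^ 2)
            * ‖exp a * exp b * exp (-a) * exp (-b) - exp (a * b - b * a)‖ := hpow
        _ ≤ (n ^ 2 : ℕ) * D * (200 * s ^ 3) := by
            have hn2 : (0:ℝ) ≤ ((n ^ 2 : ℕ) : ℝ) := by positivity
            have := mul_le_mul hLD hkey (norm_nonneg _) hD0.le
            nlinarith [this]
        _ = 200 * D * K ^ 3 / n := by
            rw [hsdef]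
            push_cast
            field_simp
    calc ‖‖(exp a * exp b * exp (-a) * exp (-b)) ^ (n ^ 2)
        - exp (A * B - B * A)‖‖
        = ‖(exp a * exp b * exp (-a) * exp (-b)) ^ (n ^ 2)
          - exp (A * B - B * A)‖ := norm_norm _
      _ ≤ 200 * D * K ^ 3 / n := hcalc
  · exact tendsto_const_div_atTop_nhds_zero_nat (200 * D * K ^ 3)

/-- left regular representation as a ring hom -/
noncomputable def lreg : 𝔸 →+* (𝔸 →L[ℂ] 𝔸) where
  toFun := ContinuousLinearMap.mul ℂ 𝔸
  map_one' := by ext z; simp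
  map_mul' x y := by ext z; simp [mul_assoc]
  map_zero' := by ext z; simp
  map_add' x y := by ext z; simp [add_mul]

lemma lreg_cont : Continuous (lreg : 𝔸 → (𝔸 →L[ℂ] 𝔸)) :=
  (ContinuousLinearMap.mul ℂ 𝔸).continuous

lemma lreg_smul (c : ℂ) (x : 𝔸) : lreg (c • x) = c • (lreg x : 𝔸 →L[ℂ] 𝔸) := by
  simp [lreg]

lemma lreg_norm_le (x : 𝔸) : ‖x‖ ≤ ‖(lreg x : 𝔸 →L[ℂ] 𝔸)‖ * ‖(1:𝔸)‖ := by
  have := (lreg x : 𝔸 →L[ℂ] 𝔸).le_opNorm 1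
  simpa [lreg] using this

theorem commutator_formula_general
    (A B : 𝔸) :
    Tendsto (fun n : ℕ =>
        (NormedSpace.exp ((n : ℂ)⁻¹ • A) * NormedSpace.exp ((n : ℂ)⁻¹ • B) *
          NormedSpace.exp (-((n : ℂ)⁻¹ • A)) * NormedSpace.exp (-((n : ℂ)⁻¹ • B))) ^ (n ^ 2))
      atTop (nhds (NormedSpace.exp (A * B - B * A))) := by
  have h1 : ‖(1 : 𝔸 →L[ℂ] 𝔸)‖ ≤ 1 := ContinuousLinearMap.norm_id_le
  have haux := commutator_formula_aux h1 (lreg A) (lreg B)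
  -- transport the statement through lreg
  have hmap : ∀ n : ℕ, lreg ((exp ((n : ℂ)⁻¹ • A) * exp ((n : ℂ)⁻¹ • B) *
          exp (-((n : ℂ)⁻¹ • A)) * exp (-((n : ℂ)⁻¹ • B))) ^ (n ^ 2))
      = (exp ((n : ℂ)⁻¹ • lreg A) * exp ((n : ℂ)⁻¹ • lreg B) *
          exp (-((n : ℂ)⁻¹ • lreg A)) * exp (-((n : ℂ)⁻¹ • lreg B))) ^ (n ^ 2) := by
    intro n
    let +nondep : NormedAlgebra ℚ 𝔸 := .restrictScalars ℚ ℂ 𝔸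
    let +nondep : NormedAlgebra ℚ (𝔸 →L[ℂ] 𝔸) := .restrictScalars ℚ ℂ (𝔸 →L[ℂ] 𝔸)
    rw [map_pow, map_mul, map_mul, map_mul,
      map_exp (lreg : 𝔸 →+* (𝔸 →L[ℂ] 𝔸)) lreg_cont,
      map_exp (lreg : 𝔸 →+* (𝔸 →L[ℂ] 𝔸)) lreg_cont,
      map_exp (lreg : 𝔸 →+* (𝔸 →L[ℂ] 𝔸)) lreg_cont,
      map_exp (lreg : 𝔸 →+* (𝔸 →L[ℂ] 𝔸)) lreg_cont,
      map_neg, map_neg, lreg_smul, lreg_smul]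
  have hmapL : lreg (exp (A * B - B * A))
      = exp (lreg A * lreg B - lreg B * lreg A) := by
    let +nondep : NormedAlgebra ℚ 𝔸 := .restrictScalars ℚ ℂ 𝔸
    let +nondep : NormedAlgebra ℚ (𝔸 →L[ℂ] 𝔸) := .restrictScalars ℚ ℂ (𝔸 →L[ℂ] 𝔸)
    rw [map_exp (lreg : 𝔸 →+* (𝔸 →L[ℂ] 𝔸)) lreg_cont, map_sub, map_mul, map_mul]
  rw [tendsto_iff_norm_sub_tendsto_zero]
  have haux' : Tendsto (fun n : ℕ =>
      ‖lreg ((exp ((n : ℂ)⁻¹ • A) * exp ((n : ℂ)⁻¹ • B) *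
          exp (-((n : ℂ)⁻¹ • A)) * exp (-((n : ℂ)⁻¹ • B))) ^ (n ^ 2)
        - exp (A * B - B * A))‖) atTop (nhds 0) := by
    have := (tendsto_iff_norm_sub_tendsto_zero).mp haux
    convert this using 2 with n
    rw [map_sub, hmap, hmapL]
  apply squeeze_zero_norm' (a := fun n : ℕ =>
      ‖lreg ((exp ((n : ℂ)⁻¹ • A) * exp ((n : ℂ)⁻¹ • B) *
          exp (-((n : ℂ)⁻¹ • A)) * exp (-((n : ℂ)⁻¹ • B))) ^ (n ^ 2)
        - exp (A * B - B * A))‖ * ‖(1:𝔸)‖)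
  · filter_upwards with n
    rw [norm_norm]
    exact le_trans (lreg_norm_le _) (by rw [map_sub])
  · have := haux'.mul_const ‖(1:𝔸)‖
    simpa using this

end
end CommutatorFormulaAux

/-- Commutator formula in a complex Banach algebra, Eq. (6) of the paper:
`(exp(A/n) exp(B/n) exp(−A/n) exp(−B/n))^{n²} → exp([A,B])` in norm. -/
theorem commutator_formula
    {𝔸 : Type*} [NormedRing 𝔸] [NormedAlgebra ℂ 𝔸] [CompleteSpace 𝔸]
    (A B : 𝔸) :
    Tendsto (fun n : ℕ =>
        (NormedSpace.exp ((n : ℂ)⁻¹ • A) * NormedSpace.exp ((n : ℂ)⁻¹ • B) *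
          NormedSpace.exp (-((n : ℂ)⁻¹ • A)) * NormedSpace.exp (-((n : ℂ)⁻¹ • B))) ^ (n ^ 2))
      atTop (nhds (NormedSpace.exp (A * B - B * A))) := by
  exact commutator_formula_general A B
end

section
/- Let H be a complex Hilbert space with Hilbert basis (φ_k)_{k∈ℕ}, let F_k = |φ_k⟩⟨φ_k| be the associated rank-one projections, and let H_1, …, H_N be bounded self-adjoint operators on H. If v ≠ w and ⟪φ_v, H_l φ_w⟫ ≠ 0 for some l ∈ {1, …, N}, then both rank-one operators |φ_v⟩⟨φ_w| and |φ_w⟩⟨φ_v| belong to the complex Lie subalgebra of the bounded operators on H generated by the set {F_k : k ∈ ℕ} ∪ {H_1, …, H_N} (the Lie span: the smallest ℂ-subspace containing the set and closed under the commutator ⁅X, Y⁆ = XY − YX). -/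
open scoped InnerProductSpace

attribute [local instance 100] LieRing.ofAssociativeRing

/-- Step in the proof of Theorem 2 of the paper: if `v ≠ w` and some control Hamiltonian
`H_l` has a nonzero matrix element `⟪φ_v, H_l φ_w⟫`, then the rank-one operators
`|φ_v⟩⟨φ_w|` and `|φ_w⟩⟨φ_v|` lie in the complex Lie algebra generated by the rank-one
projections `F_k = |φ_k⟩⟨φ_k|` and the control Hamiltonians. -/
theorem ketbra_mem_lieSpan_of_nonzero_matrix_element
    {H : Type*} [NormedAddCommGroup H] [InnerProductSpace ℂ H] [CompleteSpace H]
    (φ : HilbertBasis ℕ ℂ H) (N : ℕ) (Hc : Fin N → (H →L[ℂ] H))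
    (hHcsa : ∀ j, ∀ ψ χ : H, ⟪Hc j ψ, χ⟫_ℂ = ⟪ψ, Hc j χ⟫_ℂ)
    (v w : ℕ) (hvw : v ≠ w) (l : Fin N) (hl : ⟪(φ v : H), Hc l (φ w)⟫_ℂ ≠ 0) :
    (innerSL ℂ (φ w : H)).smulRight (φ v : H) ∈ LieSubalgebra.lieSpan ℂ (H →L[ℂ] H)
      ((Set.range fun k : ℕ => (innerSL ℂ (φ k : H)).smulRight (φ k : H)) ∪
        Set.range Hc) ∧
    (innerSL ℂ (φ v : H)).smulRight (φ w : H) ∈ LieSubalgebra.lieSpan ℂ (H →L[ℂ] H)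
      ((Set.range fun k : ℕ => (innerSL ℂ (φ k : H)).smulRight (φ k : H)) ∪
        Set.range Hc) := by
  set L := LieSubalgebra.lieSpan ℂ (H →L[ℂ] H)
    ((Set.range fun k : ℕ => (innerSL ℂ (φ k : H)).smulRight (φ k : H)) ∪
      Set.range Hc) with hL
  have horth := φ.orthonormal
  rw [orthonormal_iff_ite] at horth
  have hvw0 : ⟪(φ v : H), (φ w : H)⟫_ℂ = 0 := by simpa [hvw] using horth v w
  have hwv0 : ⟪(φ w : H), (φ v : H)⟫_ℂ = 0 := by simpa [Ne.symm hvw] using horth w v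
  have hvv : ⟪(φ v : H), (φ v : H)⟫_ℂ = 1 := by simpa using horth v v
  have hww : ⟪(φ w : H), (φ w : H)⟫_ℂ = 1 := by simpa using horth w w
  set a : ℂ := ⟪(φ v : H), Hc l (φ w)⟫_ℂ with ha
  have hconj : ⟪(φ w : H), Hc l (φ v)⟫_ℂ = starRingEnd ℂ a := by
    rw [ha, ← hHcsa l, ← inner_conj_symm]
  set Fv : H →L[ℂ] H := (innerSL ℂ (φ v : H)).smulRight (φ v : H) with hFv
  set Fw : H →L[ℂ] H := (innerSL ℂ (φ w : H)).smulRight (φ w : H) with hFw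
  have hFvL : Fv ∈ L := LieSubalgebra.subset_lieSpan (Or.inl ⟨v, rfl⟩)
  have hFwL : Fw ∈ L := LieSubalgebra.subset_lieSpan (Or.inl ⟨w, rfl⟩)
  have hAL : Hc l ∈ L := LieSubalgebra.subset_lieSpan (Or.inr ⟨l, rfl⟩)
  set C : H →L[ℂ] H := ⁅Fv, ⁅Fw, Hc l⁆⁆ with hC
  set D : H →L[ℂ] H := ⁅Fv, C⁆ with hD
  have hCL : C ∈ L := L.lie_mem hFvL (L.lie_mem hFwL hAL)
  have hDL : D ∈ L := L.lie_mem hFvL hCL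
  have hCeq : ∀ x : H, C x = -(⟪(φ w : H), x⟫_ℂ * a) • (φ v : H)
      - (⟪(φ v : H), x⟫_ℂ * starRingEnd ℂ a) • (φ w : H) := by
    intro x
    rw [← hconj, ha]
    simp only [hC, hFv, hFw, Ring.lie_def, ContinuousLinearMap.sub_apply,
      ContinuousLinearMap.mul_apply, ContinuousLinearMap.smulRight_apply, innerSL_apply_apply,
      inner_sub_right, inner_smul_right, map_sub, map_smul, smul_sub, sub_smul, smul_smul,
      hvw0, hwv0, hvv, hww]
    module
  have hDeq : ∀ x : H, D x = -(⟪(φ w : H), x⟫_ℂ * a) • (φ v : H)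
      + (⟪(φ v : H), x⟫_ℂ * starRingEnd ℂ a) • (φ w : H) := by
    intro x
    simp only [hD, Ring.lie_def, ContinuousLinearMap.sub_apply, ContinuousLinearMap.mul_apply]
    rw [hCeq, hCeq]
    simp only [hFv, ContinuousLinearMap.smulRight_apply, innerSL_apply_apply,
      inner_sub_right, inner_neg_right, inner_smul_right, map_sub, map_neg, map_smul,
      smul_sub, sub_smul, smul_smul, hvw0, hwv0, hvv, hww]
    module
  have h2a : (2 : ℂ) * a ≠ 0 := mul_ne_zero two_ne_zero hl
  have haconj : starRingEnd ℂ a ≠ 0 := by simpa using hl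
  have h2ac : (2 : ℂ) * starRingEnd ℂ a ≠ 0 := mul_ne_zero two_ne_zero haconj
  have hsum : C + D = (-(2 * a)) • (innerSL ℂ (φ w : H)).smulRight (φ v : H) := by
    ext x
    simp only [ContinuousLinearMap.add_apply, ContinuousLinearMap.smul_apply,
      ContinuousLinearMap.smulRight_apply, innerSL_apply_apply, hCeq, hDeq]
    module
  have hdiff : C - D = (-(2 * starRingEnd ℂ a)) • (innerSL ℂ (φ v : H)).smulRight (φ w : H) := by
    ext x
    simp only [ContinuousLinearMap.sub_apply, ContinuousLinearMap.smul_apply,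
      ContinuousLinearMap.smulRight_apply, innerSL_apply_apply, hCeq, hDeq]
    module
  constructor
  · have : (innerSL ℂ (φ w : H)).smulRight (φ v : H) = (-(2 * a))⁻¹ • (C + D) := by
      rw [hsum, smul_smul, inv_mul_cancel₀ (neg_ne_zero.mpr h2a), one_smul]
    rw [this]
    exact L.smul_mem _ (L.add_mem hCL hDL)
  · have : (innerSL ℂ (φ v : H)).smulRight (φ w : H) = (-(2 * starRingEnd ℂ a))⁻¹ • (C - D) := by
      rw [hdiff, smul_smul, inv_mul_cancel₀ (neg_ne_zero.mpr h2ac), one_smul]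
    rw [this]
    exact L.smul_mem _ (L.sub_mem hCL hDL)
end

section
/- Let H be a complex Hilbert space with Hilbert basis (φ_k)_{k∈ℕ}, let F_k = |φ_k⟩⟨φ_k|, and let H_1, …, H_N be bounded self-adjoint operators on H such that {H_1, …, H_N} is connected with respect to (φ_k). Then the complex Lie subalgebra L of the bounded operators on H generated by {F_k : k ∈ ℕ} ∪ {H_1, …, H_N} (the smallest ℂ-subspace containing the set and closed under the commutator ⁅X, Y⁆ = XY − YX) is dense in the strong operator topology: for every bounded operator T on H, every ε > 0 and every finite family ψ_1, …, ψ_M ∈ H, there exists L ∈ L with ‖L ψ_j − T ψ_j‖ < ε for all j = 1, …, M. -/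
open scoped InnerProductSpace

attribute [local instance 100] LieRing.ofAssociativeRing

set_option linter.unusedSectionVars false
set_option maxHeartbeats 1000000

namespace LieDenseAux
variable {H : Type*} [NormedAddCommGroup H] [InnerProductSpace ℂ H] [CompleteSpace H]

/-- rank one operator |φ v⟩⟨φ w| -/
noncomputable def E (φ : HilbertBasis ℕ ℂ H) (v w : ℕ) : H →L[ℂ] H :=
  (innerSL ℂ (φ w : H)).smulRight (φ v : H)

lemma E_apply (φ : HilbertBasis ℕ ℂ H) (v w : ℕ) (ψ : H) :
    E φ v w ψ = ⟪(φ w : H), ψ⟫_ℂ • (φ v : H) := rfl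

lemma inner_basis (φ : HilbertBasis ℕ ℂ H) (v w : ℕ) :
    ⟪(φ v : H), (φ w : H)⟫_ℂ = if v = w then 1 else 0 :=
  orthonormal_iff_ite.mp φ.orthonormal v w

lemma E_mul (φ : HilbertBasis ℕ ℂ H) (a b c d : ℕ) :
    (E φ a b) * (E φ c d) = if b = c then E φ a d else 0 := by
  ext ψ
  simp only [ContinuousLinearMap.mul_apply, E_apply, inner_smul_right, inner_basis,
    smul_smul]
  by_cases h : b = c <;> simp [h, E_apply]

lemma mem_of_inner_ne_zero (φ : HilbertBasis ℕ ℂ H)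
    (L : LieSubalgebra ℂ (H →L[ℂ] H)) (hF : ∀ k, E φ k k ∈ L)
    (A : H →L[ℂ] H) (hA : A ∈ L) (hsa : ∀ ψ χ : H, ⟪A ψ, χ⟫_ℂ = ⟪ψ, A χ⟫_ℂ)
    {v w : ℕ} (hvw : v ≠ w) (ha : ⟪(φ v : H), A (φ w)⟫_ℂ ≠ 0) :
    E φ v w ∈ L := by
  set a : ℂ := ⟪(φ v : H), A (φ w)⟫_ℂ with ha_def
  have hstar : ⟪(φ w : H), A (φ v)⟫_ℂ = starRingEnd ℂ a := by
    rw [ha_def, ← inner_conj_symm, hsa]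
  have hB : ⁅⁅E φ v v, A⁆, E φ w w⁆
      = a • E φ v w + (starRingEnd ℂ a) • E φ w v := by
    ext ψ
    simp only [Ring.lie_def, sub_mul, mul_sub, ContinuousLinearMap.sub_apply,
      ContinuousLinearMap.add_apply, ContinuousLinearMap.mul_apply,
      ContinuousLinearMap.smul_apply, E_apply, inner_smul_right, map_smul,
      inner_basis, hvw, hvw.symm, if_neg, if_pos, smul_smul]
    rw [hstar]
    simp [hvw, Ne.symm hvw, ← ha_def, mul_comm]
  have hC : ⁅E φ v v, a • E φ v w + (starRingEnd ℂ a) • E φ w v⁆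
      = a • E φ v w - (starRingEnd ℂ a) • E φ w v := by
    simp only [Ring.lie_def, mul_add, add_mul, mul_smul_comm, smul_mul_assoc, E_mul,
      if_pos rfl]
    rw [if_neg (Ne.symm hvw), if_neg hvw]
    simp only [smul_zero, add_zero, zero_add]
    abel
  have hBmem : a • E φ v w + (starRingEnd ℂ a) • E φ w v ∈ L := by
    rw [← hB]; exact L.lie_mem (L.lie_mem (hF v) hA) (hF w)
  have hCmem : a • E φ v w - (starRingEnd ℂ a) • E φ w v ∈ L := by
    rw [← hC]; exact L.lie_mem (hF v) hBmem
  have key : (a • E φ v w + (starRingEnd ℂ a) • E φ w v)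
      + (a • E φ v w - (starRingEnd ℂ a) • E φ w v) = ((2 : ℂ) * a) • E φ v w := by
    module
  have h2a : (2 : ℂ) * a ≠ 0 := by simp [ha]
  have := L.smul_mem ((2 : ℂ) * a)⁻¹ (L.add_mem hBmem hCmem)
  rwa [key, inv_smul_smul₀ h2a] at this

lemma norm_Q_le (φ : HilbertBasis ℕ ℂ H) (n : ℕ) (x : H) :
    ‖∑ k ∈ Finset.range n, ⟪(φ k : H), x⟫_ℂ • (φ k : H)‖ ≤ ‖x‖ := by
  set c : ℕ → ℂ := fun k => ⟪(φ k : H), x⟫_ℂ with hc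
  set Q : H := ∑ k ∈ Finset.range n, c k • (φ k : H) with hQ
  have hQQ : ⟪Q, Q⟫_ℂ = ∑ k ∈ Finset.range n, (‖c k‖ : ℂ) ^ 2 := by
    rw [hQ, inner_sum]
    refine Finset.sum_congr rfl fun k hk => ?_
    rw [inner_smul_right, φ.orthonormal.inner_left_sum c hk, RCLike.mul_conj]
    norm_cast
  have hn2 : ‖Q‖ ^ 2 = ∑ k ∈ Finset.range n, ‖c k‖ ^ 2 := by
    have := @inner_self_eq_norm_sq ℂ _ _ _ _ Q
    rw [hQQ] at this
    rw [← this, map_sum]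
    refine Finset.sum_congr rfl fun k _ => ?_
    norm_cast
  have hb := φ.orthonormal.sum_inner_products_le (s := Finset.range n) x
  rw [← hn2] at hb
  nlinarith [norm_nonneg Q, norm_nonneg x]

end LieDenseAux

open LieDenseAux


open scoped InnerProductSpace

/-- Eq. (20) in the proof of Theorem 2 of the paper: if the set of bounded self-adjoint
control Hamiltonians `{H_1, …, H_N}` is connected with respect to the Hilbert basis
`(φ_k)`, then the complex Lie algebra generated by the rank-one projections
`F_k = |φ_k⟩⟨φ_k|` together with the `H_l` is dense in all bounded operators in the
strong operator topology. -/
theorem lieSpan_strongly_dense_of_connected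
    {H : Type*} [NormedAddCommGroup H] [InnerProductSpace ℂ H] [CompleteSpace H]
    (φ : HilbertBasis ℕ ℂ H) (N : ℕ) (Hc : Fin N → (H →L[ℂ] H))
    (hHcsa : ∀ j, ∀ ψ χ : H, ⟪Hc j ψ, χ⟫_ℂ = ⟪ψ, Hc j χ⟫_ℂ)
    (hconn : (SimpleGraph.fromRel
        (fun v w : ℕ => ∃ l : Fin N, ⟪(φ v : H), Hc l (φ w)⟫_ℂ ≠ 0)).Connected)
    (T : H →L[ℂ] H) (ε : ℝ) (hε : 0 < ε) (M : ℕ) (ψ : Fin M → H) :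
    ∃ L ∈ LieSubalgebra.lieSpan ℂ (H →L[ℂ] H)
        ((Set.range fun k : ℕ => (innerSL ℂ (φ k : H)).smulRight (φ k : H)) ∪
          Set.range Hc),
      ∀ j : Fin M, ‖L (ψ j) - T (ψ j)‖ < ε := by
  classical
  set L := LieSubalgebra.lieSpan ℂ (H →L[ℂ] H)
      ((Set.range fun k : ℕ => (innerSL ℂ (φ k : H)).smulRight (φ k : H)) ∪
        Set.range Hc) with hL
  have hF : ∀ k, E φ k k ∈ L := fun k =>
    LieSubalgebra.subset_lieSpan (Or.inl ⟨k, rfl⟩)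
  have hHmem : ∀ l, Hc l ∈ L := fun l =>
    LieSubalgebra.subset_lieSpan (Or.inr ⟨l, rfl⟩)
  -- adjacency gives membership of the matrix unit
  have hadj : ∀ {v w : ℕ},
      (SimpleGraph.fromRel
        (fun v w : ℕ => ∃ l : Fin N, ⟪(φ v : H), Hc l (φ w)⟫_ℂ ≠ 0)).Adj v w →
      E φ v w ∈ L := by
    intro v w h
    rw [SimpleGraph.fromRel_adj] at h
    obtain ⟨hne, h | h⟩ := h
    · obtain ⟨l, hl⟩ := h
      exact mem_of_inner_ne_zero φ L hF (Hc l) (hHmem l) (hHcsa l) hne hl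
    · obtain ⟨l, hl⟩ := h
      have : ⟪(φ v : H), Hc l (φ w)⟫_ℂ ≠ 0 := by
        have he : ⟪(φ v : H), Hc l (φ w)⟫_ℂ
            = starRingEnd ℂ ⟪(φ w : H), Hc l (φ v)⟫_ℂ := by
          rw [← hHcsa l, inner_conj_symm]
        rw [he]
        simpa only [ne_eq, map_eq_zero] using hl
      exact mem_of_inner_ne_zero φ L hF (Hc l) (hHmem l) (hHcsa l) hne this
  -- connectivity gives all matrix units
  have hE : ∀ v w : ℕ, E φ v w ∈ L := by
    intro v w
    obtain ⟨p⟩ := hconn.preconnected v w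
    induction p with
    | nil => exact hF _
    | @cons u x w h p ih =>
      rcases eq_or_ne u w with rfl | huw
      · exact hF _
      · have hb : ⁅E φ u x, E φ x w⁆ = E φ u w := by
          rw [Ring.lie_def, E_mul, E_mul, if_pos rfl, if_neg (Ne.symm huw), sub_zero]
        rw [← hb]
        exact L.lie_mem (hadj h) ih
  -- the approximating finite-rank operators
  set Lop : ℕ → (H →L[ℂ] H) := fun n =>
    ∑ v ∈ Finset.range n, ∑ w ∈ Finset.range n,
      ⟪(φ v : H), T (φ w)⟫_ℂ • E φ v w with hLop
  have hLmem : ∀ n, Lop n ∈ L := fun n =>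
    sum_mem fun v _ => sum_mem fun w _ => L.smul_mem _ (hE v w)
  -- pointwise formula
  set Q : ℕ → H → H := fun n x =>
    ∑ k ∈ Finset.range n, ⟪(φ k : H), x⟫_ℂ • (φ k : H) with hQdef
  have hQT : ∀ n x, Lop n x = Q n (T (Q n x)) := by
    intro n x
    simp only [hLop, hQdef, ContinuousLinearMap.coe_sum', Finset.sum_apply,
      ContinuousLinearMap.coe_smul', Pi.smul_apply, E_apply, map_sum, map_smul,
      inner_sum, inner_smul_right, Finset.smul_sum, smul_smul]
    refine Finset.sum_congr rfl fun v _ => ?_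
    rw [Finset.sum_smul]
    exact Finset.sum_congr rfl fun w _ => by rw [mul_comm]
  -- Q n is a contraction and converges pointwise to the identity
  have hQnorm : ∀ n x, ‖Q n x‖ ≤ ‖x‖ := fun n x => norm_Q_le φ n x
  have hQlin : ∀ n (a b : H), Q n (a - b) = Q n a - Q n b := by
    intro n a b
    simp [hQdef, inner_sub_right, sub_smul, Finset.sum_sub_distrib]
  have htend : ∀ x : H, Filter.Tendsto (fun n => Q n x) Filter.atTop (nhds x) := by
    intro x
    have := (φ.hasSum_repr x).tendsto_sum_nat
    simpa [hQdef, φ.repr_apply_apply] using this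
  -- main convergence
  have key : ∀ x : H, Filter.Tendsto (fun n => ‖Lop n x - T x‖) Filter.atTop (nhds 0) := by
    intro x
    have hbound : ∀ n, ‖Lop n x - T x‖ ≤ ‖T (Q n x) - T x‖ + ‖Q n (T x) - T x‖ := by
      intro n
      have h1 : Lop n x - T x = Q n (T (Q n x) - T x) + (Q n (T x) - T x) := by
        rw [hQT, hQlin]; abel
      calc ‖Lop n x - T x‖ ≤ ‖Q n (T (Q n x) - T x)‖ + ‖Q n (T x) - T x‖ := by
            rw [h1]; exact norm_add_le _ _
        _ ≤ ‖T (Q n x) - T x‖ + ‖Q n (T x) - T x‖ := by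
            gcongr; exact hQnorm _ _
    have hg : Filter.Tendsto
        (fun n => ‖T (Q n x) - T x‖ + ‖Q n (T x) - T x‖) Filter.atTop (nhds 0) := by
      have t1 : Filter.Tendsto (fun n => T (Q n x)) Filter.atTop (nhds (T x)) :=
        (T.continuous.tendsto x).comp (htend x)
      have t2 := htend (T x)
      have n1 : Filter.Tendsto (fun n => ‖T (Q n x) - T x‖) Filter.atTop (nhds 0) :=
        (tendsto_iff_norm_sub_tendsto_zero.mp t1)
      have n2 : Filter.Tendsto (fun n => ‖Q n (T x) - T x‖) Filter.atTop (nhds 0) :=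
        (tendsto_iff_norm_sub_tendsto_zero.mp t2)
      simpa using n1.add n2
    exact squeeze_zero (fun n => norm_nonneg _) hbound hg
  have hev : ∀ᶠ n in Filter.atTop, ∀ j : Fin M, ‖Lop n (ψ j) - T (ψ j)‖ < ε :=
    Filter.eventually_all.mpr fun j => (key (ψ j)).eventually_lt_const hε
  obtain ⟨n, hn⟩ := hev.exists
  exact ⟨Lop n, hLmem n, hn⟩
end
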